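/- Let X be a complete decomposition space and n ≥ 0. Writing 1a^n for the word of length n+1 with first letter 1 and remaining letters a, the subset X_{1a^n} ⊆ X_{n+1} is the disjoint union of s_0(→X_n) and →X_{n+1}; the map s_0 : →X_n → X_{0a^n} is a bijection; and for τ ∈ →X_n the long edge of s_0(τ) equals the long edge of τ. Symmetrically, X_{a^n1} is the disjoint union of s_n(→X_n) and →X_{n+1}, with s_n : →X_n → X_{a^n0} a bijection preserving long edges. (This realises the convolution identities ζ * Φ_n = Φ_n + Φ_{n+1} = Φ_n * ζ at the objective level.) -/

import Mathlib

open CategoryTheory CategoryTheory.Limits Opposite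

notation "⦋" n "⦌" => SimplexCategory.mk n

notation:1000 X " _⦋" n "⦌" => Prefunctor.obj (CategoryTheory.Functor.toPrefunctor X) (Opposite.op (SimplexCategory.mk n))

/-- A map in the simplex category is *generic* if it preserves the endpoints. -/
def IsGeneric {a b : SimplexCategory} (g : a ⟶ b) : Prop :=
  g.toOrderHom 0 = 0 ∧ g.toOrderHom (Fin.last a.len) = Fin.last b.len

/-- A map in the simplex category is *free* if it is distance preserving. -/
def IsFree {a b : SimplexCategory} (f : a ⟶ b) : Prop :=
  ∀ i : Fin (a.len + 1), (f.toOrderHom i : ℕ) = (f.toOrderHom 0 : ℕ) + (i : ℕ)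

/-- A decomposition space is a simplicial set carrying every pushout in `Δ` of a
generic map `g` along a free map `f` to a pullback of sets. -/
def IsDecomposition (X : SSet) : Prop :=
  ∀ ⦃a b c d : SimplexCategory⦄ (g : a ⟶ b) (f : a ⟶ c) (h : b ⟶ d) (k : c ⟶ d),
    IsGeneric g → IsFree f → IsPushout g f h k →
    IsPullback (X.map h.op) (X.map k.op) (X.map g.op) (X.map f.op)

/-- A simplicial set is *complete* if all degeneracy maps are injective. -/
def Complete (X : SSet) : Prop :=
  ∀ (n : ℕ) (i : Fin (n + 1)), Function.Injective (X.σ i : X _⦋n⦌ ⟶ X _⦋n + 1⦌)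

/-- The free map `[1] → [n]` sending `0, 1` to `i, i+1`; it induces the map
taking the `i`-th principal edge (`0`-indexed) of an `n`-simplex. -/
def principalEdge (n : ℕ) (i : Fin n) : (⦋1⦌ : SimplexCategory) ⟶ ⦋n⦌ :=
  SimplexCategory.mkHom
    { toFun := fun j => ⟨i.1 + j.1, by have := i.2; have := j.2; omega⟩
      monotone' := fun a b h => by
        simp only [Fin.mk_le_mk]
        exact Nat.add_le_add_left h i.1 }

/-- The unique generic map `[1] → [n]` (`0 ↦ 0`, `1 ↦ n`); it induces the map
taking the long edge of an `n`-simplex. -/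
def longEdgeMap (n : ℕ) : (⦋1⦌ : SimplexCategory) ⟶ ⦋n⦌ :=
  SimplexCategory.mkHom
    { toFun := fun j => ⟨j.1 * n, by
        have h := j.2
        have : j.1 * n ≤ 1 * n := Nat.mul_le_mul_right n (by omega)
        omega⟩
      monotone' := fun a b h => by
        simp only [Fin.mk_le_mk]
        exact Nat.mul_le_mul_right n h }

/-- The alphabet `{0, 1, a}`: `z` prescribes a degenerate principal edge, `o` an
unrestricted one, `a` a nondegenerate one. -/
inductive Letter where
  | z : Letter
  | o : Letter
  | a : Letter
  deriving DecidableEq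

/-- The subset of `X₁` prescribed by a letter. -/
def edgeSet (X : SSet) : Letter → Set (X _⦋1⦌)
  | .z => Set.range (X.σ (0 : Fin 1))
  | .o => Set.univ
  | .a => (Set.range (X.σ (0 : Fin 1)))ᶜ

/-- `X_w`, the set of `n`-simplices whose principal edges have the types
prescribed by the word `w`. -/
def wordSet (X : SSet) {n : ℕ} (w : Fin n → Letter) : Set (X _⦋n⦌) :=
  {σ | ∀ i : Fin n, X.map (principalEdge n i).op σ ∈ edgeSet X (w i)}

/-- A simplex is *effective* if all its principal edges are nondegenerate. -/
def Effective (X : SSet) {n : ℕ} (σ : X _⦋n⦌) : Prop :=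
  ∀ i : Fin n, X.map (principalEdge n i).op σ ∉ Set.range (X.σ (0 : Fin 1))

/-- The constant word `aa⋯a`. -/
def allA (n : ℕ) : Fin n → Letter := fun _ => Letter.a

/-- Concatenation of words. -/
def concatW {m n : ℕ} (v : Fin m → Letter) (v' : Fin n → Letter) : Fin (m + n) → Letter :=
  fun i => if h : i.1 < m then v ⟨i.1, h⟩ else v' ⟨i.1 - m, by have := i.2; omega⟩

/-- The word `v ℓ v'` obtained by splicing a letter `ℓ` between the words `v` and `v'`. -/
def splice {m n : ℕ} (v : Fin m → Letter) (l : Letter) (v' : Fin n → Letter) :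
    Fin (m + n + 1) → Letter :=
  fun i => if h : i.1 < m then v ⟨i.1, h⟩
    else if h2 : i.1 = m then l
    else v' ⟨i.1 - (m + 1), by have := i.2; omega⟩

/-- A simplex (of positive dimension) is degenerate if it is in the image of some
degeneracy map. -/
def Degen (X : SSet) {n : ℕ} (σ : X _⦋n + 1⦌) : Prop :=
  ∃ i : Fin (n + 1), σ ∈ Set.range (X.σ i)

/-- A simplicial map is *cULF* if its naturality squares on all generic maps are
pullbacks. -/
def IsCULF {Y X : SSet} (f : Y ⟶ X) : Prop :=
  ∀ ⦃a b : SimplexCategory⦄ (g : a ⟶ b), IsGeneric g →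
    IsPullback (f.app (op b)) (Y.map g.op) (X.map g.op) (f.app (op a))

/-- A simplicial map is *conservative* if its naturality squares on all degeneracy
maps are pullbacks. -/
def Conservative {Y X : SSet} (f : Y ⟶ X) : Prop :=
  ∀ (n : ℕ) (i : Fin (n + 1)),
    IsPullback (f.app (op (SimplexCategory.mk n))) (Y.σ i) (X.σ i)
      (f.app (op (SimplexCategory.mk (n + 1))))

/-- A simplicial set is *stiff* if it carries every pushout in `Δ` of a codegeneracy
map along a free map to a pullback of sets. -/
def Stiff (X : SSet) : Prop :=
  ∀ (k : ℕ) (i : Fin (k + 1)) ⦃c d : SimplexCategory⦄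
    (f : SimplexCategory.mk (k + 1) ⟶ c) (h : SimplexCategory.mk k ⟶ d) (j : c ⟶ d),
    IsFree f → IsPushout (SimplexCategory.σ i) f h j →
    IsPullback (X.map h.op) (X.map j.op) (X.map (SimplexCategory.σ i).op) (X.map f.op)

/-- The map `[0] → [n]` picking out the vertex `i`. -/
def vertexMap (n : ℕ) (i : Fin (n + 1)) : (⦋0⦌ : SimplexCategory) ⟶ ⦋n⦌ :=
  SimplexCategory.mkHom ⟨fun _ => i, fun _ _ _ => le_refl _⟩

/-- The unique map `[n] → [0]`; it induces the iterated degeneracy `X₀ → Xₙ`. -/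
def toZero (n : ℕ) : (⦋n⦌ : SimplexCategory) ⟶ ⦋0⦌ :=
  SimplexCategory.mkHom ⟨fun _ => 0, fun _ _ _ => le_refl _⟩

/-- The generic map `[2] → [m+n]` sending `0,1,2` to `0,m,m+n`. -/
def midMap (m n : ℕ) : (⦋2⦌ : SimplexCategory) ⟶ ⦋m + n⦌ :=
  SimplexCategory.mkHom
    { toFun := fun j => ⟨if j.1 = 0 then 0 else if j.1 = 1 then m else m + n, by
        split
        · omega
        · split <;> omega⟩
      monotone' := by
        intro a b hab
        have h : a.1 ≤ b.1 := hab
        have ha := a.2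
        have hb := b.2
        simp only [Fin.mk_le_mk]
        split <;> split <;> (try split) <;> (try split) <;> omega }

/-- The free map `[m] → [m+n]` onto the initial segment. -/
def freeInitial (m n : ℕ) : (⦋m⦌ : SimplexCategory) ⟶ ⦋m + n⦌ :=
  SimplexCategory.mkHom ⟨fun i => ⟨i.1, by have := i.2; omega⟩, fun a b h => h⟩

/-- The free map `[n] → [m+n]` onto the final segment. -/
def freeFinal (m n : ℕ) : (⦋n⦌ : SimplexCategory) ⟶ ⦋m + n⦌ :=
  SimplexCategory.mkHom ⟨fun i => ⟨m + i.1, by have := i.2; omega⟩,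
    fun a b h => by
      simp only [Fin.mk_le_mk]
      exact Nat.add_le_add_left h m⟩

/-- The word `1aa⋯a` (`n` letters `a`). -/
def oneA (n : ℕ) : Fin (n + 1) → Letter := fun i => if i.1 = 0 then Letter.o else Letter.a

/-- The word `0aa⋯a` (`n` letters `a`). -/
def zeroA (n : ℕ) : Fin (n + 1) → Letter := fun i => if i.1 = 0 then Letter.z else Letter.a

/-- The word `aa⋯a1` (`n` letters `a`). -/
def aOne (n : ℕ) : Fin (n + 1) → Letter := fun i => if i.1 = n then Letter.o else Letter.a

/-- The word `aa⋯a0` (`n` letters `a`). -/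
def aZero (n : ℕ) : Fin (n + 1) → Letter := fun i => if i.1 = n then Letter.z else Letter.a

/-- The number of letters `0` in a word. -/
def zcount {n : ℕ} (w : Fin n → Letter) : ℕ :=
  (Finset.univ.filter fun i => w i = Letter.z).card

/-- The surjection `[n] → [n - zcount w]` collapsing, for each position `j` with
`w j = 0`, the vertex `j+1` onto the vertex `j`; the induced map
`X_{n - zcount w} → X_n` is the iterated degeneracy `s_{j_k} ⋯ s_{j_1}` where
`j_1 < ⋯ < j_k` are the positions of the letters `0` of `w`. -/
def collapseMap {n : ℕ} (w : Fin n → Letter) :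
    (⦋n⦌ : SimplexCategory) ⟶ ⦋n - zcount w⦌ :=
  SimplexCategory.mkHom
    { toFun := fun t =>
        ⟨(Finset.univ.filter fun i : Fin n => i.1 < t.1 ∧ ¬ (w i = Letter.z)).card, by
          have h2 := Finset.card_filter_add_card_filter_not
            (s := (Finset.univ : Finset (Fin n))) (p := fun i => w i = Letter.z)
          have h1 : (Finset.univ.filter fun i : Fin n => i.1 < t.1 ∧ ¬ (w i = Letter.z)).card
              ≤ (Finset.univ.filter fun i : Fin n => ¬ (w i = Letter.z)).card :=
            Finset.card_le_card (fun x hx => by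
              simp only [Finset.mem_filter] at hx ⊢
              exact ⟨hx.1, hx.2.2⟩)
          have h3 : zcount w = (Finset.univ.filter fun i : Fin n => w i = Letter.z).card := rfl
          simp only [Finset.card_univ, Fintype.card_fin] at h2
          omega⟩
      monotone' := by
        intro a b hab
        have h : a.1 ≤ b.1 := hab
        simp only [Fin.mk_le_mk]
        exact Finset.card_le_card (fun x hx => by
          simp only [Finset.mem_filter] at hx ⊢
          exact ⟨hx.1, lt_of_lt_of_le hx.2.1 h, hx.2.2⟩) }

/-- An edge has finite length if there is a bound on the dimensions of the effective
simplices having it as long edge. -/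
def FiniteLength (X : SSet) (a : X _⦋1⦌) : Prop :=
  ∃ N : ℕ, ∀ (n : ℕ) (σ : X _⦋n⦌), Effective X σ →
    X.map (longEdgeMap n).op σ = a → n ≤ N

/-- A *tight* decomposition space: a complete decomposition space in which every edge
has finite length. -/
def Tight (X : SSet) : Prop :=
  IsDecomposition X ∧ Function.Injective (X.σ (0 : Fin 1) : X _⦋0⦌ ⟶ X _⦋1⦌) ∧
    ∀ a : X _⦋1⦌, FiniteLength X a

/-- The length of an edge: the supremum of the dimensions of effective simplices
having it as long edge. -/
noncomputable def edgeLength (X : SSet) (a : X _⦋1⦌) : ℕ :=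
  sSup {n : ℕ | ∃ σ : X _⦋n⦌, Effective X σ ∧ X.map (longEdgeMap n).op σ = a}

/-- A complete simplicial set is *split* if all face maps preserve nondegenerate
simplices. -/
def Split (X : SSet) : Prop :=
  Complete X ∧ ∀ (n : ℕ) (i : Fin (n + 3)) (σ : X _⦋n + 2⦌),
    ¬ Degen X σ → ¬ Degen X (X.δ i σ)

/-- The counit: the indicator function of the degenerate edges. -/
noncomputable def epsFun (X : SSet) : X _⦋1⦌ → ℚ := fun f =>
  haveI := Classical.propDecidable (f ∈ Set.range (X.σ (0 : Fin 1)))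
  if f ∈ Set.range (X.σ (0 : Fin 1)) then 1 else 0

/-- Convolution product on `ℚ`-valued functions on `X₁`. -/
noncomputable def convFun (X : SSet) (φ ψ : X _⦋1⦌ → ℚ) : X _⦋1⦌ → ℚ :=
  fun f => ∑ᶠ σ ∈ (fun τ => X.δ (1 : Fin 3) τ) ⁻¹' {f},
    φ (X.δ (2 : Fin 3) σ) * ψ (X.δ (0 : Fin 3) σ)

/-- The Möbius function `Φ_even - Φ_odd`. -/
noncomputable def muFun (X : SSet) : X _⦋1⦌ → ℚ :=
  fun f => ∑ᶠ n : ℕ, (-1 : ℚ) ^ n *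
    (Nat.card {σ : X.obj (op (SimplexCategory.mk n)) // Effective X σ ∧ X.map (longEdgeMap n).op σ = f} : ℚ)

/-- The category `Δ_inj`: objects those of the simplex category, morphisms the
injective monotone maps. -/
structure DeltaInj : Type where
  /-- the underlying object of the simplex category -/
  obj : SimplexCategory

instance : Category DeltaInj where
  Hom a b := {f : a.obj ⟶ b.obj // Function.Injective f.toOrderHom}
  id a := ⟨𝟙 a.obj, by
    rw [SimplexCategory.id_toOrderHom]
    exact fun x y h => h⟩
  comp f g := ⟨f.1 ≫ g.1, by
    rw [SimplexCategory.comp_toOrderHom]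
    exact fun x y h => f.2 (g.2 h)⟩
  id_comp f := by apply Subtype.ext; simp
  comp_id f := by apply Subtype.ext; simp
  assoc f g h := by apply Subtype.ext; simp

/-- The inclusion functor `Δ_inj ⊆ Δ`. -/
def DeltaInj.incl : DeltaInj ⥤ SimplexCategory where
  obj a := a.obj
  map f := f.1

/-- A *semi-decomposition space*: a semi-simplicial set carrying every pushout in
`Δ_inj` of a generic (inner) face map along a free (outer) face map to a pullback. -/
def IsSemiDecomposition (Z : DeltaInjᵒᵖ ⥤ Type) : Prop :=
  ∀ ⦃a b c d : DeltaInj⦄ (g : a ⟶ b) (f : a ⟶ c) (h : b ⟶ d) (k : c ⟶ d),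
    IsGeneric g.1 → IsFree f.1 → IsPushout g f h k →
    IsPullback (Z.map h.op) (Z.map k.op) (Z.map g.op) (Z.map f.op)

/-- A map of semi-simplicial sets is *ULF* if its naturality squares on all generic
face maps are pullbacks. -/
def IsULF {Z W : DeltaInjᵒᵖ ⥤ Type} (φ : Z ⟶ W) : Prop :=
  ∀ ⦃a b : DeltaInj⦄ (g : a ⟶ b), IsGeneric g.1 →
    IsPullback (φ.app (op b)) (Z.map g.op) (W.map g.op) (φ.app (op a))

lemma conservative_id (X : SSet) : Conservative (𝟙 X) := by
  intro n i
  exact IsPullback.of_horiz_isIso ⟨by simp⟩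

lemma conservative_comp {X Y Z : SSet} {f : X ⟶ Y} {g : Y ⟶ Z}
    (hf : Conservative f) (hg : Conservative g) : Conservative (f ≫ g) := by
  intro n i
  simpa using IsPullback.paste_horiz (hf n i) (hg n i)

lemma isCULF_id (X : SSet) : IsCULF (𝟙 X) := by
  intro a b gm hgm
  exact IsPullback.of_horiz_isIso ⟨by simp⟩

lemma isCULF_comp {X Y Z : SSet} {f : X ⟶ Y} {g : Y ⟶ Z}
    (hf : IsCULF f) (hg : IsCULF g) : IsCULF (f ≫ g) := by
  intro a b gm hgm
  simpa using IsPullback.paste_horiz (hf gm hgm) (hg gm hgm)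

lemma isULF_id (Z : DeltaInjᵒᵖ ⥤ Type) : IsULF (𝟙 Z) := by
  intro a b gm hgm
  exact IsPullback.of_horiz_isIso ⟨by simp⟩

lemma isULF_comp {X Y Z : DeltaInjᵒᵖ ⥤ Type} {f : X ⟶ Y} {g : Y ⟶ Z}
    (hf : IsULF f) (hg : IsULF g) : IsULF (f ≫ g) := by
  intro a b gm hgm
  simpa using IsPullback.paste_horiz (hf gm hgm) (hg gm hgm)

/-- The category of split simplicial sets and conservative maps. -/
structure SplitSSet : Type 1 where
  /-- the underlying simplicial set -/
  X : SSet.{0}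
  split : Split X

instance : Category SplitSSet where
  Hom A B := {f : A.X ⟶ B.X // Conservative f}
  id A := ⟨𝟙 A.X, conservative_id A.X⟩
  comp f g := ⟨f.1 ≫ g.1, conservative_comp f.2 g.2⟩
  id_comp f := by apply Subtype.ext; simp
  comp_id f := by apply Subtype.ext; simp
  assoc f g h := by apply Subtype.ext; simp

/-- The forgetful functor from split simplicial sets to simplicial sets. -/
def SplitSSet.forget : SplitSSet ⥤ SSet where
  obj A := A.X
  map f := f.1

/-- The category of split decomposition spaces and cULF maps. -/
structure SplitDecomp : Type 1 where
  /-- the underlying simplicial set -/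
  X : SSet.{0}
  split : Split X
  decomp : IsDecomposition X

instance : Category SplitDecomp where
  Hom A B := {f : A.X ⟶ B.X // IsCULF f}
  id A := ⟨𝟙 A.X, isCULF_id A.X⟩
  comp f g := ⟨f.1 ≫ g.1, isCULF_comp f.2 g.2⟩
  id_comp f := by apply Subtype.ext; simp
  comp_id f := by apply Subtype.ext; simp
  assoc f g h := by apply Subtype.ext; simp

/-- The forgetful functor from split decomposition spaces to simplicial sets. -/
def SplitDecomp.forget : SplitDecomp ⥤ SSet where
  obj A := A.X
  map f := f.1

/-- The category of semi-decomposition spaces and ULF maps. -/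
structure SemiDecomp : Type 1 where
  /-- the underlying semi-simplicial set -/
  Z : DeltaInjᵒᵖ ⥤ Type
  semidecomp : IsSemiDecomposition Z

instance : Category SemiDecomp where
  Hom A B := {φ : A.Z ⟶ B.Z // IsULF φ}
  id A := ⟨𝟙 A.Z, isULF_id A.Z⟩
  comp f g := ⟨f.1 ≫ g.1, isULF_comp f.2 g.2⟩
  id_comp f := by apply Subtype.ext; simp
  comp_id f := by apply Subtype.ext; simp
  assoc f g h := by apply Subtype.ext; simp

/-- The forgetful functor from semi-decomposition spaces to semi-simplicial sets. -/
def SemiDecomp.forget : SemiDecomp ⥤ (DeltaInjᵒᵖ ⥤ Type) where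
  obj A := A.Z
  map f := f.1

lemma sigma_val {n : ℕ} (i : Fin (n + 1)) (j : Fin (n + 2)) :
    ((SimplexCategory.σ i).toOrderHom j : ℕ) = if j.1 ≤ i.1 then j.1 else j.1 - 1 := by
  simp only [SimplexCategory.σ, SimplexCategory.mkHom, SimplexCategory.Hom.toOrderHom_mk,
    Fin.predAboveOrderHom_coe, Fin.predAbove]
  split_ifs with h1 h2 h2 <;> simp only [Fin.lt_def, Fin.val_castSucc] at h1 <;>
    simp only [Fin.coe_pred, Fin.coe_castPred] <;> omega

lemma delta_val {n : ℕ} (i : Fin (n + 2)) (j : Fin (n + 1)) :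
    ((SimplexCategory.δ i).toOrderHom j : ℕ) = if j.1 < i.1 then j.1 else j.1 + 1 := by
  simp only [SimplexCategory.δ, SimplexCategory.mkHom, SimplexCategory.Hom.toOrderHom_mk]
  simp [Fin.succAbove]
  split_ifs <;> simp_all [Fin.lt_def]

lemma pe_val {n : ℕ} (i : Fin n) (j : Fin 2) :
    (((principalEdge n i)).toOrderHom j : ℕ) = i.1 + j.1 := rfl

lemma vertex_val {n : ℕ} (i : Fin (n + 1)) (j : Fin 1) :
    ((vertexMap n i).toOrderHom j : ℕ) = i.1 := rfl

lemma long_val {n : ℕ} (j : Fin 2) :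
    ((longEdgeMap n).toOrderHom j : ℕ) = j.1 * n := rfl

lemma pe_comp_sigma (n : ℕ) (i : Fin (n+1)) (j : Fin (n+1)) (hj : j.1 ≠ i.1) :
    principalEdge (n+1) j ≫ SimplexCategory.σ i
      = principalEdge n ⟨if j.1 < i.1 then j.1 else j.1 - 1, by
          have := i.2; have := j.2; split <;> omega⟩ := by
  ext t : 3
  apply Fin.ext
  simp only [SimplexCategory.comp_toOrderHom, OrderHom.comp_coe, Function.comp_apply,
    sigma_val, pe_val]
  have ht : (t : ℕ) < 2 := t.2
  have := i.2
  have := j.2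
  by_cases h1 : (j : ℕ) + t ≤ i <;> by_cases h2 : (j : ℕ) < i <;> simp [h1, h2, Fin.lt_def] <;> omega

lemma long_comp_sigma (n : ℕ) (i : Fin (n + 1)) :
    longEdgeMap (n + 1) ≫ SimplexCategory.σ i = longEdgeMap n := by
  ext t : 3
  apply Fin.ext
  simp only [SimplexCategory.comp_toOrderHom, OrderHom.comp_coe, Function.comp_apply,
    sigma_val, long_val]
  have ht : (t : ℕ) < 2 := t.2
  have := i.2
  have h01 : (t : ℕ) = 0 ∨ (t : ℕ) = 1 := by omega
  rcases h01 with h | h <;> simp only [h] <;> simp_all <;> omega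

lemma vertex_comp_sigma (n : ℕ) (i : Fin (n + 1)) :
    vertexMap (n + 1) i.castSucc ≫ SimplexCategory.σ i = vertexMap n i := by
  ext t : 3
  apply Fin.ext
  simp only [SimplexCategory.comp_toOrderHom, OrderHom.comp_coe, Function.comp_apply,
    sigma_val, vertex_val, Fin.coe_castSucc]
  simp

lemma comm_gen (n : ℕ) (i : Fin (n + 1)) :
    SimplexCategory.σ (0 : Fin 1) ≫ vertexMap n i
      = principalEdge (n + 1) i ≫ SimplexCategory.σ i := by
  ext t : 3
  apply Fin.ext
  simp only [SimplexCategory.comp_toOrderHom, OrderHom.comp_coe, Function.comp_apply,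
    sigma_val, vertex_val, pe_val]
  have ht : (t : ℕ) < 2 := t.2
  (repeat' split) <;> simp_all <;> omega

lemma inr_eq (n : ℕ) (i : Fin (n + 1))
    (s : PushoutCocone (SimplexCategory.σ (0 : Fin 1)) (principalEdge (n + 1) i))
    (x : Fin (n + 2)) (hx : (x : ℕ) = i.1 ∨ (x : ℕ) = i.1 + 1) (z : Fin 1) :
    s.inr.toOrderHom x = s.inl.toOrderHom z := by
  have hcond := congrArg SimplexCategory.Hom.toOrderHom s.condition
  simp only [SimplexCategory.comp_toOrderHom] at hcond
  have h2 := DFunLike.congr_fun hcond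
    (⟨(x : ℕ) - i.1, by simp only [SimplexCategory.len_mk]; have := i.2; omega⟩ : Fin (⦋1⦌.len + 1))
  simp only [OrderHom.comp_coe, Function.comp_apply] at h2
  have hxj : x = (principalEdge (n + 1) i).toOrderHom
      ⟨(x : ℕ) - i.1, by simp only [SimplexCategory.len_mk]; have := i.2; omega⟩ := by
    apply Fin.ext
    simp only [pe_val]
    omega
  rw [hxj, ← h2]
  apply congrArg
  apply Fin.ext
  have hz := z.2
  simp only [sigma_val]
  by_cases h1 : (x : ℕ) - (i : ℕ) ≤ 0 <;> simp [h1] <;> omega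

lemma pushout_gen (n : ℕ) (i : Fin (n + 1)) :
    IsPushout (SimplexCategory.σ (0 : Fin 1)) (principalEdge (n + 1) i)
      (vertexMap n i) (SimplexCategory.σ i) := by
  apply IsPushout.of_isColimit' ⟨comm_gen n i⟩
  apply PushoutCocone.IsColimit.mk _ (fun s => SimplexCategory.δ i.succ ≫ s.inr)
  · intro s
    apply SimplexCategory.Hom.ext_zero_left
    simp only [SimplexCategory.comp_toOrderHom, OrderHom.comp_coe, Function.comp_apply]
    rw [inr_eq n i s _ (by
      left
      simp only [delta_val, vertex_val, Fin.val_succ]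
      simp)]
  · intro s
    ext t : 3
    simp only [SimplexCategory.comp_toOrderHom, OrderHom.comp_coe, Function.comp_apply]
    by_cases h : (t : ℕ) = i.1 + 1
    · rw [inr_eq n i s _ (by
        left
        simp only [delta_val, sigma_val, Fin.val_succ]
        simp [h]) 0]
      rw [inr_eq n i s t (by omega) 0]
    · congr 1
      apply Fin.ext
      simp only [delta_val, sigma_val, Fin.val_succ]
      have := t.2
      have := i.2
      by_cases h1 : (t : ℕ) ≤ i <;> simp [h1] <;> split_ifs <;> omega
  · intro s m hl hr
    rw [← hr]
    rw [← Category.assoc, SimplexCategory.δ_comp_σ_succ, Category.id_comp]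


lemma types_pb_exists {A B Z P : Type u} {fst : P ⟶ A} {snd : P ⟶ B} {f : A ⟶ Z} {g : B ⟶ Z}
    (hP : IsPullback fst snd f g) (a : A) (b : B) (hab : f a = g b) :
    ∃ p : P, fst p = a ∧ snd p = b := by
  refine ⟨hP.lift (TypeCat.ofHom fun _ : PUnit => a) (TypeCat.ofHom fun _ => b) (by ext; exact hab) ⟨⟩, ?_, ?_⟩
  · simpa using ConcreteCategory.congr_hom (hP.lift_fst (TypeCat.ofHom fun _ : PUnit => a) (TypeCat.ofHom fun _ => b) (by ext; exact hab)) ⟨⟩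
  · simpa using ConcreteCategory.congr_hom (hP.lift_snd (TypeCat.ofHom fun _ : PUnit => a) (TypeCat.ofHom fun _ => b) (by ext; exact hab)) ⟨⟩

lemma types_pb_inj {A B Z P : Type u} {fst : P ⟶ A} {snd : P ⟶ B} {f : A ⟶ Z} {g : B ⟶ Z}
    (hP : IsPullback fst snd f g) {p q : P} (h1 : fst p = fst q) (h2 : snd p = snd q) : p = q :=
  ConcreteCategory.congr_hom (hP.hom_ext (k := TypeCat.ofHom fun _ : PUnit => p) (l := TypeCat.ofHom fun _ => q)
    (by ext; exact h1) (by ext; exact h2)) ⟨⟩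

lemma map_comp_apply (X : SSet) {a b c : SimplexCategory} (f : a ⟶ b) (g : b ⟶ c)
    (x : X.obj (op c)) : X.map (f ≫ g).op x = X.map f.op (X.map g.op x) := by
  rw [op_comp, X.map_comp]; rfl

lemma generic_sigma0 : IsGeneric (SimplexCategory.σ (0 : Fin 1)) := by
  constructor <;>
  · apply Fin.ext
    rw [sigma_val]
    simp [Fin.last, SimplexCategory.len_mk]

lemma free_pe (n : ℕ) (i : Fin n) : IsFree (principalEdge n i) := by
  intro t
  simp only [pe_val]
  norm_num

lemma main_gen (X : SSet) (hX : IsDecomposition X) (n : ℕ) (i : Fin (n + 1))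
    (w wz : Fin (n + 1) → Letter) (hwi : w i = Letter.o)
    (hwa : ∀ j, j ≠ i → w j = Letter.a)
    (hzi : wz i = Letter.z) (hza : ∀ j, j ≠ i → wz j = Letter.a) :
    wordSet X w = X.σ i '' wordSet X (allA n) ∪ wordSet X (allA (n + 1)) ∧
      Disjoint (X.σ i '' wordSet X (allA n)) (wordSet X (allA (n + 1))) ∧
      Set.BijOn (X.σ i) (wordSet X (allA n)) (wordSet X wz) ∧
      ∀ τ ∈ wordSet X (allA n),
        X.map (longEdgeMap (n + 1)).op (X.σ i τ) = X.map (longEdgeMap n).op τ := by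
  have hσ : (X.σ i : X _⦋n⦌ ⟶ X _⦋n + 1⦌) = X.map (SimplexCategory.σ i).op := rfl
  have hσ0 : (X.σ (0 : Fin 1) : X _⦋0⦌ ⟶ X _⦋1⦌)
      = X.map (SimplexCategory.σ (0 : Fin 1)).op := rfl
  have P := hX (SimplexCategory.σ (0 : Fin 1)) (principalEdge (n + 1) i) (vertexMap n i)
    (SimplexCategory.σ i) generic_sigma0 (free_pe (n + 1) i) (pushout_gen n i)
  have hval_ne : ∀ j : Fin (n + 1), j ≠ i → j.1 ≠ i.1 := fun j hj hc => hj (Fin.ext hc)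
  have hedge_i : ∀ τ : X _⦋n⦌, X.map (principalEdge (n + 1) i).op (X.σ i τ)
      = X.σ (0 : Fin 1) (X.map (vertexMap n i).op τ) := by
    intro τ
    rw [hσ, hσ0]
    exact (map_comp_apply X _ _ τ).symm.trans
      ((congrArg (fun f => X.map f.op τ) (comm_gen n i).symm).trans (map_comp_apply X _ _ τ))
  have hedge_ne : ∀ (τ : X _⦋n⦌) (j : Fin (n + 1)) (j' : Fin n),
      j.1 ≠ i.1 → (if j.1 < i.1 then j.1 else j.1 - 1) = j'.1 →
      X.map (principalEdge (n + 1) j).op (X.σ i τ) = X.map (principalEdge n j').op τ := by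
    intro τ j j' hj hj'
    rw [hσ]
    exact (map_comp_apply X _ _ τ).symm.trans
      ((congrArg (fun f => X.map f.op τ) (pe_comp_sigma n i j hj)).trans
        (congrArg (fun z => X.map (principalEdge n z).op τ) (Fin.ext hj')))
  have hcover1 : ∀ j' : Fin n, ∃ j : Fin (n + 1),
      j.1 ≠ i.1 ∧ (if j.1 < i.1 then j.1 else j.1 - 1) = j'.1 := by
    intro j'
    by_cases hlt : j'.1 < i.1
    · refine ⟨⟨j'.1, by have := j'.2; omega⟩, ?_, ?_⟩
      · show (j' : ℕ) ≠ (i : ℕ)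
        omega
      · show (if (j' : ℕ) < (i : ℕ) then (j' : ℕ) else (j' : ℕ) - 1) = (j' : ℕ)
        rw [if_pos hlt]
    · refine ⟨⟨j'.1 + 1, by have := j'.2; omega⟩, ?_, ?_⟩
      · show (j' : ℕ) + 1 ≠ (i : ℕ)
        omega
      · show (if (j' : ℕ) + 1 < (i : ℕ) then (j' : ℕ) + 1 else (j' : ℕ) + 1 - 1) = (j' : ℕ)
        rw [if_neg (by omega)]
        omega
  have hcover2 : ∀ j : Fin (n + 1), j.1 ≠ i.1 → ∃ j' : Fin n,
      (if j.1 < i.1 then j.1 else j.1 - 1) = j'.1 :=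
    fun j hj => ⟨⟨if j.1 < i.1 then j.1 else j.1 - 1,
      by have := i.2; have := j.2; split <;> omega⟩, rfl⟩
  have hinj : Function.Injective (X.σ i : X _⦋n⦌ ⟶ X _⦋n + 1⦌) := by
    intro p q hpq
    rw [hσ] at hpq
    have h2 := congrArg (X.map (vertexMap (n + 1) i.castSucc).op) hpq
    rw [← map_comp_apply, ← map_comp_apply, vertex_comp_sigma] at h2
    exact types_pb_inj P h2 hpq
  have hlift : ∀ σ : X _⦋n + 1⦌,
      X.map (principalEdge (n + 1) i).op σ ∈ Set.range (X.σ (0 : Fin 1)) →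
      (∀ j : Fin (n + 1), j ≠ i →
        X.map (principalEdge (n + 1) j).op σ ∉ Set.range (X.σ (0 : Fin 1))) →
      ∃ τ ∈ wordSet X (allA n), X.σ i τ = σ := by
    intro σ hd hnd
    obtain ⟨x, hx⟩ := hd
    obtain ⟨τ, hτ1, hτ2⟩ := types_pb_exists P x σ (by rw [← hσ0]; exact hx)
    rw [← hσ] at hτ2
    refine ⟨τ, ?_, hτ2⟩
    intro j'
    simp only [allA, edgeSet, Set.mem_compl_iff]
    obtain ⟨j, hj, hj'⟩ := hcover1 j'
    rw [← hedge_ne τ j j' hj hj', hτ2]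
    exact hnd j (fun hc => hj (congrArg Fin.val hc))
  refine ⟨?_, ?_, ⟨?_, fun p _ q _ hpq => hinj hpq, ?_⟩, ?_⟩
  · apply Set.Subset.antisymm
    · intro σ hσw
      by_cases hd : X.map (principalEdge (n + 1) i).op σ ∈ Set.range (X.σ (0 : Fin 1))
      · left
        obtain ⟨τ, hτ, hτ2⟩ := hlift σ hd (fun j hj => by
          have := hσw j
          rw [hwa j hj] at this
          exact this)
        exact ⟨τ, hτ, hτ2⟩
      · right
        intro j
        by_cases hj : j = i
        · rw [hj]; exact hd
        · have := hσw j
          rw [hwa j hj] at this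
          exact this
    · rintro σ (⟨τ, hτ, rfl⟩ | hall)
      · intro j
        by_cases hj : j = i
        · rw [hj, hwi]
          exact Set.mem_univ _
        · rw [hwa j hj]
          obtain ⟨j', hj'⟩ := hcover2 j (hval_ne j hj)
          rw [hedge_ne τ j j' (hval_ne j hj) hj']
          exact hτ j'
      · intro j
        by_cases hj : j = i
        · rw [hj, hwi]
          exact Set.mem_univ _
        · rw [hwa j hj]
          exact hall j
  · refine Set.disjoint_left.mpr ?_
    rintro σ ⟨τ, _, rfl⟩ hall
    exact hall i ⟨X.map (vertexMap n i).op τ, (hedge_i τ).symm⟩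
  · intro τ hτ j
    by_cases hj : j = i
    · rw [hj, hzi]
      exact ⟨X.map (vertexMap n i).op τ, (hedge_i τ).symm⟩
    · rw [hza j hj]
      obtain ⟨j', hj'⟩ := hcover2 j (hval_ne j hj)
      rw [hedge_ne τ j j' (hval_ne j hj) hj']
      exact hτ j'
  · intro σ hσw
    have hd : X.map (principalEdge (n + 1) i).op σ ∈ Set.range (X.σ (0 : Fin 1)) := by
      have := hσw i
      rwa [hzi] at this
    obtain ⟨τ, hτ, hτ2⟩ := hlift σ hd (fun j hj => by
      have := hσw j
      rw [hza j hj] at this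
      exact this)
    exact ⟨τ, hτ, hτ2⟩
  · intro τ _
    rw [hσ]
    exact (map_comp_apply X _ _ τ).symm.trans
      (congrArg (fun f => X.map f.op τ) (long_comp_sigma n i))

theorem statement7 (X : SSet) (hX : IsDecomposition X)
    (hc : Function.Injective (X.σ (0 : Fin 1) : X _⦋0⦌ ⟶ X _⦋1⦌)) (n : ℕ) :
    (wordSet X (oneA n)
        = X.σ (0 : Fin (n + 1)) '' wordSet X (allA n) ∪ wordSet X (allA (n + 1)) ∧
      Disjoint (X.σ (0 : Fin (n + 1)) '' wordSet X (allA n)) (wordSet X (allA (n + 1))) ∧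
      Set.BijOn (X.σ (0 : Fin (n + 1))) (wordSet X (allA n)) (wordSet X (zeroA n)) ∧
      (∀ τ ∈ wordSet X (allA n),
        X.map (longEdgeMap (n + 1)).op (X.σ (0 : Fin (n + 1)) τ)
          = X.map (longEdgeMap n).op τ)) ∧
    (wordSet X (aOne n)
        = X.σ (Fin.last n) '' wordSet X (allA n) ∪ wordSet X (allA (n + 1)) ∧
      Disjoint (X.σ (Fin.last n) '' wordSet X (allA n)) (wordSet X (allA (n + 1))) ∧
      Set.BijOn (X.σ (Fin.last n)) (wordSet X (allA n)) (wordSet X (aZero n)) ∧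
      (∀ τ ∈ wordSet X (allA n),
        X.map (longEdgeMap (n + 1)).op (X.σ (Fin.last n) τ)
          = X.map (longEdgeMap n).op τ)) := by
  constructor
  · exact main_gen X hX n 0 (oneA n) (zeroA n)
      (by simp [oneA]) (fun j hj => by
        simp only [oneA, if_neg (show j.1 ≠ 0 from fun hc => hj (Fin.ext hc))])
      (by simp [zeroA]) (fun j hj => by
        simp only [zeroA, if_neg (show j.1 ≠ 0 from fun hc => hj (Fin.ext hc))])
  · exact main_gen X hX n (Fin.last n) (aOne n) (aZero n)
      (by simp [aOne]) (fun j hj => by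
        simp only [aOne, if_neg (show j.1 ≠ n from fun hc => hj (Fin.ext hc))])
      (by simp [aZero]) (fun j hj => by
        simp only [aZero, if_neg (show j.1 ≠ n from fun hc => hj (Fin.ext hc))])
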